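/- Let P̃ : [0,T] → S^k be continuous with P̃(t) ≥ 0 for all t, and suppose for each t the value function identity holds: for a controlled linear system with cost J, the optimal cost from initial state x at time t equals xᵀ P̃(t) x. If P̃ and P̂ are two such nonnegative solutions of the Riccati equation (with the same coefficients) satisfying P̃(T) ≥ P̂(T), and each is the value function of the LQ problem with respective terminal weight, then P̃(t) ≥ P̂(t) for all t ∈ [0,T]. Equivalently (a purely ODE formulation): if P̃ and P̂ solve P'(t) + P A + Aᵀ P + Cᵀ P C + Q - (Bᵀ P + Dᵀ P C)ᵀ (R + Dᵀ P D)⁻¹ (Bᵀ P + Dᵀ P C) = 0 on [0,T] with R + Dᵀ P̃ D > 0 and R + Dᵀ P̂ D > 0 and P̃(T) ≥ P̂(T), then P̃(t) ≥ P̂(t) for all t. -/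

import Mathlib

open Matrix Filter

attribute [local instance] Matrix.normedAddCommGroup Matrix.normedSpace

section RiccatiAux

lemma dot_mulVec_bound {n : ℕ} (x y : Fin n → ℝ) (M : Matrix (Fin n) (Fin n) ℝ) :
    |x ⬝ᵥ M *ᵥ y| ≤ (∑ i, |x i|) * (∑ j, |y j|) * ‖M‖ := by
  calc |x ⬝ᵥ M *ᵥ y| = |∑ i, x i * ∑ j, M i j * y j| := rfl
    _ ≤ ∑ i, |x i * ∑ j, M i j * y j| := Finset.abs_sum_le_sum_abs _ _
    _ ≤ ∑ i, |x i| * ((∑ j, |y j|) * ‖M‖) := by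
        refine Finset.sum_le_sum fun i _ => ?_
        rw [abs_mul]
        refine mul_le_mul_of_nonneg_left ?_ (abs_nonneg _)
        calc |∑ j, M i j * y j| ≤ ∑ j, |M i j * y j| := Finset.abs_sum_le_sum_abs _ _
          _ ≤ ∑ j, |y j| * ‖M‖ := by
              refine Finset.sum_le_sum fun j _ => ?_
              rw [abs_mul, mul_comm]
              exact mul_le_mul_of_nonneg_left (M.norm_entry_le_entrywise_sup_norm) (abs_nonneg _)
          _ = (∑ j, |y j|) * ‖M‖ := by rw [Finset.sum_mul]
    _ = (∑ i, |x i|) * (∑ j, |y j|) * ‖M‖ := by rw [← Finset.sum_mul, mul_assoc]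

lemma mulVec_entry_bound {n : ℕ} (M : Matrix (Fin n) (Fin n) ℝ) (x : Fin n → ℝ) (i : Fin n) :
    |(M *ᵥ x) i| ≤ ∑ j, ‖M‖ * |x j| := by
  calc |(M *ᵥ x) i| = |∑ j, M i j * x j| := rfl
    _ ≤ ∑ j, |M i j * x j| := Finset.abs_sum_le_sum_abs _ _
    _ ≤ ∑ j, ‖M‖ * |x j| := Finset.sum_le_sum fun j _ => by
        rw [abs_mul]
        exact mul_le_mul_of_nonneg_right M.norm_entry_le_entrywise_sup_norm (abs_nonneg _)

noncomputable def quadCLM {n : ℕ} (x : Fin n → ℝ) : Matrix (Fin n) (Fin n) ℝ →L[ℝ] ℝ :=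
  LinearMap.mkContinuousOfExistsBound
    { toFun := fun M => x ⬝ᵥ M *ᵥ x
      map_add' := fun M N => by simp [add_mulVec, dotProduct_add]
      map_smul' := fun c M => by simp [smul_mulVec] }
    ⟨(∑ i, |x i|) * (∑ j, |x j|), fun M => by
      simpa [Real.norm_eq_abs, mul_comm] using dot_mulVec_bound x x M⟩

@[simp] lemma quadCLM_apply {n : ℕ} (x : Fin n → ℝ) (M : Matrix (Fin n) (Fin n) ℝ) :
    quadCLM x M = x ⬝ᵥ M *ᵥ x := rfl

lemma hasDerivAt_quad {n : ℕ} {x : Fin n → ℝ} {P : ℝ → Matrix (Fin n) (Fin n) ℝ}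
    {P' : Matrix (Fin n) (Fin n) ℝ} {t : ℝ} (hP : HasDerivAt P P' t) :
    HasDerivAt (fun τ => x ⬝ᵥ (P τ) *ᵥ x) (x ⬝ᵥ P' *ᵥ x) t := by
  exact ((quadCLM x).hasFDerivAt.comp_hasDerivAt t hP)

lemma deriv_nonneg_right {f : ℝ → ℝ} {m t₁ T : ℝ} (hd : HasDerivAt f m t₁)
    (h0 : f t₁ = 0) (hT : t₁ < T) (hpos : ∀ τ ∈ Set.Ioc t₁ T, 0 ≤ f τ) : 0 ≤ m := by
  have hs := hd.hasDerivWithinAt (s := Set.Ioi t₁)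
  have htend : Tendsto (slope f t₁) (nhdsWithin t₁ (Set.Ioi t₁)) (nhds m) := by
    have := hasDerivWithinAt_iff_tendsto_slope.mp hs
    simpa [Set.diff_singleton_eq_self (by simp : t₁ ∉ Set.Ioi t₁)] using this
  refine ge_of_tendsto htend ?_
  filter_upwards [Ioc_mem_nhdsGT_of_mem ⟨le_refl _, hT⟩] with τ hτ
  rw [slope_def_field, h0, sub_zero]
  exact div_nonneg (hpos τ hτ) (by linarith [hτ.1])

lemma one_le_dot_self {n : ℕ} (hn : 0 < n) (x : Fin n → ℝ) (hx : ‖x‖ = 1) :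
    1 ≤ x ⬝ᵥ x := by
  have : Nonempty (Fin n) := ⟨⟨0, hn⟩⟩
  obtain ⟨i, -, hi⟩ := Finset.exists_mem_eq_sup (Finset.univ : Finset (Fin n))
    Finset.univ_nonempty (fun i => ‖x i‖₊)
  have hnn : ‖x‖₊ = ‖x i‖₊ := by rw [Pi.nnnorm_def]; exact hi
  have hxi : |x i| = 1 := by
    have h2 : ‖x i‖ = ‖x‖ := by
      rw [← coe_nnnorm, ← coe_nnnorm, hnn]
    rw [← Real.norm_eq_abs, h2, hx]
  calc (1:ℝ) = x i * x i := by
        have := abs_mul_abs_self (x i); rw [hxi] at this; linarith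
    _ ≤ ∑ j, x j * x j :=
        Finset.single_le_sum (fun j _ => mul_self_nonneg (x j)) (Finset.mem_univ i)
    _ = x ⬝ᵥ x := rfl

lemma ric_key {n l : ℕ} (a a' c c' p s : Matrix (Fin n) (Fin n) ℝ)
    (b d : Matrix (Fin n) (Fin l) ℝ) (b' d' : Matrix (Fin l) (Fin n) ℝ)
    (r h f : Matrix (Fin l) (Fin l) ℝ)
    (h1 : (r + d' * p * d) * h = 1) (h2 : (r + d' * s * d) * f = 1)
    (h3 : f * (r + d' * s * d) = 1) :
    (p - s) * (a + b * -(h * (b' * p + d' * p * c)))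
      + (a' + -((p * b + c' * (p * d)) * h) * b') * (p - s)
      + (c' + -((p * b + c' * (p * d)) * h) * d') *
          ((p - s) * (c + d * -(h * (b' * p + d' * p * c))))
      + (-((p * b + c' * (p * d)) * h) + (s * b + c' * (s * d)) * f) *
          ((r + d' * s * d) * (-(h * (b' * p + d' * p * c)) + f * (b' * s + d' * s * c)))
    = p * a - s * a + a' * p - a' * s + c' * (p * c) - c' * (s * c)
        - (p * b + c' * (p * d)) * (h * (b' * p + d' * p * c))
        + (s * b + c' * (s * d)) * (f * (b' * s + d' * s * c)) := by
  have expand :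
      (p - s) * (a + b * -(h * (b' * p + d' * p * c)))
      + (a' + -((p * b + c' * (p * d)) * h) * b') * (p - s)
      + (c' + -((p * b + c' * (p * d)) * h) * d') *
          ((p - s) * (c + d * -(h * (b' * p + d' * p * c))))
      + (-((p * b + c' * (p * d)) * h) + (s * b + c' * (s * d)) * f) *
          ((r + d' * s * d) * (-(h * (b' * p + d' * p * c)) + f * (b' * s + d' * s * c)))
      = (p * a - s * a + a' * p - a' * s + c' * (p * c) - c' * (s * c)
          - (p * b + c' * (p * d)) * (h * (b' * p + d' * p * c))
          + (s * b + c' * (s * d)) * (f * (b' * s + d' * s * c)))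
        + ((p * b + c' * (p * d)) *
              (h * (((r + d' * p * d) * h) * (b' * p + d' * p * c) - (b' * p + d' * p * c)))
          - (p * b + c' * (p * d)) *
              (h * (((r + d' * s * d) * f) * (b' * s + d' * s * c) - (b' * s + d' * s * c)))
          - (s * b + c' * (s * d)) *
              ((f * (r + d' * s * d)) * (h * (b' * p + d' * p * c)) - h * (b' * p + d' * p * c))
          + (s * b + c' * (s * d)) *
              (f * (((r + d' * s * d) * f) * (b' * s + d' * s * c) - (b' * s + d' * s * c)))) := by
    simp only [Matrix.mul_add, Matrix.add_mul, Matrix.mul_sub, Matrix.sub_mul,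
      Matrix.neg_mul, Matrix.mul_neg, Matrix.mul_assoc, sub_eq_add_neg, neg_add_rev, neg_neg]
    abel
  rw [expand, h1, h2, h3]
  simp

noncomputable def ricK {n l : ℕ} (Ct P : Matrix (Fin n) (Fin n) ℝ)
    (B D : Matrix (Fin n) (Fin l) ℝ) (R : Matrix (Fin l) (Fin l) ℝ) :
    Matrix (Fin l) (Fin n) ℝ :=
  -((R + Dᵀ * P * D)⁻¹ * (Bᵀ * P + Dᵀ * P * Ct))

noncomputable def ricAb {n l : ℕ} (At Ct P : Matrix (Fin n) (Fin n) ℝ)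
    (B D : Matrix (Fin n) (Fin l) ℝ) (R : Matrix (Fin l) (Fin l) ℝ) :
    Matrix (Fin n) (Fin n) ℝ :=
  At + B * ricK Ct P B D R

noncomputable def ricCb {n l : ℕ} (Ct P : Matrix (Fin n) (Fin n) ℝ)
    (B D : Matrix (Fin n) (Fin l) ℝ) (R : Matrix (Fin l) (Fin l) ℝ) :
    Matrix (Fin n) (Fin n) ℝ :=
  Ct + D * ricK Ct P B D R

noncomputable def ricW {n l : ℕ} (Ct P S : Matrix (Fin n) (Fin n) ℝ)
    (B D : Matrix (Fin n) (Fin l) ℝ) (R : Matrix (Fin l) (Fin l) ℝ) :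
    Matrix (Fin l) (Fin n) ℝ :=
  ricK Ct P B D R - ricK Ct S B D R

noncomputable def ricDD {n l : ℕ} (At Ct P S : Matrix (Fin n) (Fin n) ℝ)
    (B D : Matrix (Fin n) (Fin l) ℝ) (R : Matrix (Fin l) (Fin l) ℝ) :
    Matrix (Fin n) (Fin n) ℝ :=
  -((P - S) * ricAb At Ct P B D R + (ricAb At Ct P B D R)ᵀ * (P - S)
    + (ricCb Ct P B D R)ᵀ * ((P - S) * ricCb Ct P B D R)
    + (ricW Ct P S B D R)ᵀ * ((R + Dᵀ * S * D) * ricW Ct P S B D R))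

lemma ric_diff {n l : ℕ}
    (At Ct P S Qt : Matrix (Fin n) (Fin n) ℝ) (B D : Matrix (Fin n) (Fin l) ℝ)
    (R : Matrix (Fin l) (Fin l) ℝ)
    (hP : Pᵀ = P) (hS : Sᵀ = S) (hR : Rᵀ = R)
    (hdG : IsUnit (R + Dᵀ * P * D).det) (hdE : IsUnit (R + Dᵀ * S * D).det) :
    -(P * At + Atᵀ * P + Ctᵀ * P * Ct + Qt -
        (Bᵀ * P + Dᵀ * P * Ct)ᵀ * (R + Dᵀ * P * D)⁻¹ * (Bᵀ * P + Dᵀ * P * Ct))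
    - -(S * At + Atᵀ * S + Ctᵀ * S * Ct + Qt -
        (Bᵀ * S + Dᵀ * S * Ct)ᵀ * (R + Dᵀ * S * D)⁻¹ * (Bᵀ * S + Dᵀ * S * Ct))
    = ricDD At Ct P S B D R := by
  have h1 : (R + Dᵀ * P * D) * (R + Dᵀ * P * D)⁻¹ = 1 := Matrix.mul_nonsing_inv _ hdG
  have h2 : (R + Dᵀ * S * D) * (R + Dᵀ * S * D)⁻¹ = 1 := Matrix.mul_nonsing_inv _ hdE
  have h3 : (R + Dᵀ * S * D)⁻¹ * (R + Dᵀ * S * D) = 1 := Matrix.nonsing_inv_mul _ hdE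
  have hGiT : ((R + Dᵀ * (P * D))⁻¹)ᵀ = (R + Dᵀ * (P * D))⁻¹ := by
    rw [Matrix.transpose_nonsing_inv]
    congr 1
    simp [hP, hR, Matrix.mul_assoc]
  have hEiT : ((R + Dᵀ * (S * D))⁻¹)ᵀ = (R + Dᵀ * (S * D))⁻¹ := by
    rw [Matrix.transpose_nonsing_inv]
    congr 1
    simp [hS, hR, Matrix.mul_assoc]
  have hUT : (Bᵀ * P + Dᵀ * P * Ct)ᵀ = P * B + Ctᵀ * (P * D) := by
    simp [hP, Matrix.mul_assoc]
  have hVT : (Bᵀ * S + Dᵀ * S * Ct)ᵀ = S * B + Ctᵀ * (S * D) := by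
    simp [hS, Matrix.mul_assoc]
  have hAbT : (ricAb At Ct P B D R)ᵀ
      = Atᵀ + -((P * B + Ctᵀ * (P * D)) * (R + Dᵀ * P * D)⁻¹) * Bᵀ := by
    simp [ricAb, ricK, hP, hGiT, Matrix.mul_assoc]
  have hCbT : (ricCb Ct P B D R)ᵀ
      = Ctᵀ + -((P * B + Ctᵀ * (P * D)) * (R + Dᵀ * P * D)⁻¹) * Dᵀ := by
    simp [ricCb, ricK, hP, hGiT, Matrix.mul_assoc]
  have hWT : (ricW Ct P S B D R)ᵀ
      = -((P * B + Ctᵀ * (P * D)) * (R + Dᵀ * P * D)⁻¹)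
        + (S * B + Ctᵀ * (S * D)) * (R + Dᵀ * S * D)⁻¹ := by
    simp [ricW, ricK, hP, hS, hGiT, hEiT, Matrix.mul_assoc, sub_eq_add_neg]
  have key := ric_key At (Atᵀ) Ct (Ctᵀ) P S B D (Bᵀ) (Dᵀ)
    R ((R + Dᵀ * P * D)⁻¹) ((R + Dᵀ * S * D)⁻¹) h1 h2 h3
  rw [show ricDD At Ct P S B D R =
      -((P - S) * (At + B * -((R + Dᵀ * P * D)⁻¹ * (Bᵀ * P + Dᵀ * P * Ct)))
        + (Atᵀ + -((P * B + Ctᵀ * (P * D)) * (R + Dᵀ * P * D)⁻¹) * Bᵀ) * (P - S)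
        + (Ctᵀ + -((P * B + Ctᵀ * (P * D)) * (R + Dᵀ * P * D)⁻¹) * Dᵀ) *
            ((P - S) * (Ct + D * -((R + Dᵀ * P * D)⁻¹ * (Bᵀ * P + Dᵀ * P * Ct))))
        + (-((P * B + Ctᵀ * (P * D)) * (R + Dᵀ * P * D)⁻¹)
            + (S * B + Ctᵀ * (S * D)) * (R + Dᵀ * S * D)⁻¹) *
            ((R + Dᵀ * S * D) * (-((R + Dᵀ * P * D)⁻¹ * (Bᵀ * P + Dᵀ * P * Ct))
              + (R + Dᵀ * S * D)⁻¹ * (Bᵀ * S + Dᵀ * S * Ct)))) from by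
    rw [ricDD, hAbT, hCbT, hWT]
    simp only [ricAb, ricCb, ricW, ricK, sub_neg_eq_add]]
  rw [key, hUT, hVT]
  simp only [Matrix.mul_assoc]
  abel

end RiccatiAux

set_option maxHeartbeats 1000000 in
/-- Riccati comparison lemma (ODE formulation): if two solutions
of the same Riccati equation satisfy P̃(T) ≥ P̂(T), then P̃(t) ≥ P̂(t). -/
theorem stmt_15 {n l : ℕ} (T : ℝ) (hT : 0 < T)
    (A C : ℝ → Matrix (Fin n) (Fin n) ℝ) (B D : ℝ → Matrix (Fin n) (Fin l) ℝ)
    (Q : ℝ → Matrix (Fin n) (Fin n) ℝ) (R : ℝ → Matrix (Fin l) (Fin l) ℝ)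
    (hA : Continuous A) (hC : Continuous C) (hB : Continuous B) (hD : Continuous D)
    (hQ : Continuous Q) (hQsym : ∀ t, (Q t).IsHermitian)
    (hR : Continuous R) (hRsym : ∀ t, (R t).IsHermitian)
    (Pt Ph : ℝ → Matrix (Fin n) (Fin n) ℝ)
    (hPtsym : ∀ t, (Pt t).IsHermitian) (hPhsym : ∀ t, (Ph t).IsHermitian)
    (hPtpos : ∀ t ∈ Set.Icc (0 : ℝ) T, (R t + (D t)ᵀ * Pt t * D t).PosDef)
    (hPhpos : ∀ t ∈ Set.Icc (0 : ℝ) T, (R t + (D t)ᵀ * Ph t * D t).PosDef)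
    (hPtode : ∀ t ∈ Set.Icc (0 : ℝ) T, HasDerivAt Pt
      (-(Pt t * A t + (A t)ᵀ * Pt t + (C t)ᵀ * Pt t * C t + Q t -
        ((B t)ᵀ * Pt t + (D t)ᵀ * Pt t * C t)ᵀ *
          (R t + (D t)ᵀ * Pt t * D t)⁻¹ *
          ((B t)ᵀ * Pt t + (D t)ᵀ * Pt t * C t))) t)
    (hPhode : ∀ t ∈ Set.Icc (0 : ℝ) T, HasDerivAt Ph
      (-(Ph t * A t + (A t)ᵀ * Ph t + (C t)ᵀ * Ph t * C t + Q t -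
        ((B t)ᵀ * Ph t + (D t)ᵀ * Ph t * C t)ᵀ *
          (R t + (D t)ᵀ * Ph t * D t)⁻¹ *
          ((B t)ᵀ * Ph t + (D t)ᵀ * Ph t * C t))) t)
    (hTle : (Pt T - Ph T).PosSemidef) :
    ∀ t ∈ Set.Icc (0 : ℝ) T, (Pt t - Ph t).PosSemidef := by
  -- trivial case n = 0
  rcases Nat.eq_zero_or_pos n with hn0 | hn
  · subst hn0
    intro t ht
    exact .of_dotProduct_mulVec_nonneg ((hPtsym t).sub (hPhsym t)) fun z => by simp [dotProduct]
  -- star is trivial on real vectors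
  have hstarn : ∀ (v : Fin n → ℝ), star v = v := fun v => funext fun i => by simp
  have hstarl : ∀ (v : Fin l → ℝ), star v = v := fun v => funext fun i => by simp
  -- transpose facts
  have hPtT : ∀ t, (Pt t)ᵀ = Pt t := fun t => by
    rw [← Matrix.conjTranspose_eq_transpose_of_trivial]; exact (hPtsym t).eq
  have hPhT : ∀ t, (Ph t)ᵀ = Ph t := fun t => by
    rw [← Matrix.conjTranspose_eq_transpose_of_trivial]; exact (hPhsym t).eq
  have hRT : ∀ t, (R t)ᵀ = R t := fun t => by
    rw [← Matrix.conjTranspose_eq_transpose_of_trivial]; exact (hRsym t).eq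
  -- difference ODE
  have hΔd : ∀ t ∈ Set.Icc (0:ℝ) T, HasDerivAt (fun τ => Pt τ - Ph τ)
      (ricDD (A t) (C t) (Pt t) (Ph t) (B t) (D t) (R t)) t := by
    intro t ht
    have h := (hPtode t ht).sub (hPhode t ht)
    have heq := ric_diff (A t) (C t) (Pt t) (Ph t) (Q t) (B t) (D t) (R t)
      (hPtT t) (hPhT t) (hRT t)
      ((hPtpos t ht).det_pos.ne'.isUnit) ((hPhpos t ht).det_pos.ne'.isUnit)
    rw [← heq]
    exact h
  -- inclusion of subintervals
  have hsubIcc : ∀ {t₀ : ℝ}, t₀ ∈ Set.Icc (0:ℝ) T → Set.Icc t₀ T ⊆ Set.Icc (0:ℝ) T :=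
    fun h t htt => ⟨le_trans h.1 htt.1, htt.2⟩
  -- pointwise continuity
  have hPtA : ∀ t ∈ Set.Icc (0:ℝ) T, ContinuousAt Pt t :=
    fun t ht => (hPtode t ht).continuousAt
  have hPhA : ∀ t ∈ Set.Icc (0:ℝ) T, ContinuousAt Ph t :=
    fun t ht => (hPhode t ht).continuousAt
  -- helper for products
  have matCA : ∀ {m p q : ℕ} {f : ℝ → Matrix (Fin m) (Fin p) ℝ}
      {g : ℝ → Matrix (Fin p) (Fin q) ℝ} {x : ℝ},
      ContinuousAt f x → ContinuousAt g x → ContinuousAt (fun y => f y * g y) x := by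
    intro m p q f g x hf hg
    have hmul : Continuous (fun z : Matrix (Fin m) (Fin p) ℝ × Matrix (Fin p) (Fin q) ℝ =>
        z.1 * z.2) := continuous_fst.matrix_mul continuous_snd
    exact hmul.continuousAt.comp (hf.prodMk hg)
  -- continuity of Ab and Cb on [0,T]
  have hKCA : ∀ t ∈ Set.Icc (0:ℝ) T,
      ContinuousAt (fun τ => ricK (C τ) (Pt τ) (B τ) (D τ) (R τ)) t := by
    intro t ht
    have hGA : ContinuousAt (fun τ => R τ + (D τ)ᵀ * Pt τ * D τ) t :=
      (hR.continuousAt).add (matCA (matCA (hD.matrix_transpose.continuousAt) (hPtA t ht))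
        hD.continuousAt)
    have hinv : ContinuousAt (fun τ => (R τ + (D τ)ᵀ * Pt τ * D τ)⁻¹) t := by
      refine ContinuousAt.comp ?_ hGA
      refine continuousAt_matrix_inv _ ?_
      rw [Ring.inverse_eq_inv']
      exact continuousAt_inv₀ (hPtpos t ht).det_pos.ne'
    have hUA : ContinuousAt (fun τ => (B τ)ᵀ * Pt τ + (D τ)ᵀ * Pt τ * C τ) t :=
      (matCA (hB.matrix_transpose.continuousAt) (hPtA t ht)).add
        (matCA (matCA (hD.matrix_transpose.continuousAt) (hPtA t ht)) hC.continuousAt)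
    exact (matCA hinv hUA).neg
  have hAbC : ContinuousOn (fun τ => ricAb (A τ) (C τ) (Pt τ) (B τ) (D τ) (R τ))
      (Set.Icc (0:ℝ) T) := by
    intro t ht
    refine ContinuousAt.continuousWithinAt ?_
    simp only [ricAb]
    exact (hA.continuousAt).add (matCA hB.continuousAt (hKCA t ht))
  have hCbC : ContinuousOn (fun τ => ricCb (C τ) (Pt τ) (B τ) (D τ) (R τ))
      (Set.Icc (0:ℝ) T) := by
    intro t ht
    refine ContinuousAt.continuousWithinAt ?_
    simp only [ricCb]
    exact (hC.continuousAt).add (matCA hD.continuousAt (hKCA t ht))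
  -- bounds
  obtain ⟨α₀, hα₀⟩ := isCompact_Icc.exists_bound_of_continuousOn hAbC
  obtain ⟨γ₀, hγ₀⟩ := isCompact_Icc.exists_bound_of_continuousOn hCbC
  set α := max α₀ 0 with hαdef
  set γ := max γ₀ 0 with hγdef
  have hα : ∀ t ∈ Set.Icc (0:ℝ) T, ‖ricAb (A t) (C t) (Pt t) (B t) (D t) (R t)‖ ≤ α :=
    fun t ht => (hα₀ t ht).trans (le_max_left _ _)
  have hγ : ∀ t ∈ Set.Icc (0:ℝ) T, ‖ricCb (C t) (Pt t) (B t) (D t) (R t)‖ ≤ γ :=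
    fun t ht => (hγ₀ t ht).trans (le_max_left _ _)
  have hα0 : 0 ≤ α := le_max_right _ _
  have hγ0 : 0 ≤ γ := le_max_right _ _
  set K := 2*(n:ℝ)^2*α + (n:ℝ)^3*γ^2 + 1 with hKdef
  have hKpos : 0 < K := by positivity
  intro t₀ ht₀
  -- main claim
  have main : ∀ ε : ℝ, 0 < ε → ∀ t ∈ Set.Icc t₀ T, ∀ x : Fin n → ℝ, ‖x‖ = 1 →
      0 < x ⬝ᵥ (Pt t - Ph t) *ᵥ x + ε * Real.exp (K * (T - t)) * (x ⬝ᵥ x) := by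
    intro ε hε
    by_contra hcon
    push_neg at hcon
    obtain ⟨tb, htb, xb, hxb1, hxble⟩ := hcon
    set g : ℝ × (Fin n → ℝ) → ℝ := fun z =>
      z.2 ⬝ᵥ (Pt z.1 - Ph z.1) *ᵥ z.2 + ε * Real.exp (K * (T - z.1)) * (z.2 ⬝ᵥ z.2) with hgdef
    have hgc : ContinuousOn g (Set.Icc t₀ T ×ˢ (Set.univ : Set (Fin n → ℝ))) := by
      intro z hz
      refine ContinuousAt.continuousWithinAt ?_
      have hz1 : z.1 ∈ Set.Icc (0:ℝ) T := hsubIcc ht₀ hz.1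
      have hΔA : ContinuousAt (fun w : ℝ × (Fin n → ℝ) => Pt w.1 - Ph w.1) z :=
        ((hPtA z.1 hz1).comp continuousAt_fst).sub ((hPhA z.1 hz1).comp continuousAt_fst)
      have hquad : Continuous (fun p : Matrix (Fin n) (Fin n) ℝ × (Fin n → ℝ) =>
          p.2 ⬝ᵥ p.1 *ᵥ p.2) :=
        continuous_snd.dotProduct (continuous_fst.matrix_mulVec continuous_snd)
      have h1 : ContinuousAt (fun w : ℝ × (Fin n → ℝ) =>
          w.2 ⬝ᵥ (Pt w.1 - Ph w.1) *ᵥ w.2) z :=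
        hquad.continuousAt.comp (hΔA.prodMk continuousAt_snd)
      have h2 : ContinuousAt (fun w : ℝ × (Fin n → ℝ) =>
          ε * Real.exp (K * (T - w.1)) * (w.2 ⬝ᵥ w.2)) z := by
        have he : Continuous (fun w : ℝ × (Fin n → ℝ) => ε * Real.exp (K * (T - w.1))) :=
          continuous_const.mul (Real.continuous_exp.comp (continuous_const.mul (continuous_const.sub continuous_fst)))
        exact (he.mul (continuous_snd.dotProduct continuous_snd)).continuousAt
      exact h1.add h2
    set SS : Set (ℝ × (Fin n → ℝ)) :=
      (Set.Icc t₀ T ×ˢ Metric.sphere (0 : Fin n → ℝ) 1) ∩ g ⁻¹' (Set.Iic 0) with hSSdef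
    have hprodc : IsCompact (Set.Icc t₀ T ×ˢ Metric.sphere (0 : Fin n → ℝ) 1) :=
      isCompact_Icc.prod (isCompact_sphere _ _)
    have hSSclosed : IsClosed SS := by
      refine ContinuousOn.preimage_isClosed_of_isClosed ?_ ?_ isClosed_Iic
      · exact hgc.mono (Set.prod_mono_right (Set.subset_univ _))
      · exact isClosed_Icc.prod Metric.isClosed_sphere
    have hSSc : IsCompact SS := hprodc.of_isClosed_subset hSSclosed Set.inter_subset_left
    have hSne : SS.Nonempty := by
      refine ⟨(tb, xb), ⟨⟨htb, ?_⟩, ?_⟩⟩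
      · exact mem_sphere_zero_iff_norm.mpr hxb1
      · simpa [hgdef] using hxble
    have hbadc : IsCompact (Prod.fst '' SS) := hSSc.image continuous_fst
    have hbadne : (Prod.fst '' SS).Nonempty := hSne.image Prod.fst
    have ht₁mem := hbadc.sSup_mem hbadne
    obtain ⟨⟨t₁, x⟩, ⟨⟨ht₁Icc, hxsph⟩, hxle0⟩, ht₁eq⟩ := ht₁mem
    dsimp only at ht₁Icc hxsph hxle0 ht₁eq
    have hx1 : ‖x‖ = 1 := mem_sphere_zero_iff_norm.mp hxsph
    have hub : ∀ τ ∈ Prod.fst '' SS, τ ≤ t₁ := by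
      intro τ hτ
      have := le_csSup hbadc.bddAbove hτ
      simpa [← ht₁eq] using this
    have ht₁Icc0 : t₁ ∈ Set.Icc (0:ℝ) T := hsubIcc ht₀ ht₁Icc
    have hxx1 : 1 ≤ x ⬝ᵥ x := one_le_dot_self hn x hx1
    have hxxpos : 0 < x ⬝ᵥ x := lt_of_lt_of_le one_pos hxx1
    have hxabs : ∀ i, |x i| ≤ 1 := fun i => by
      have := norm_le_pi_norm x i
      rwa [hx1, Real.norm_eq_abs] at this
    have hxsum : (∑ i, |x i|) ≤ (n:ℝ) := by
      calc (∑ i, |x i|) ≤ ∑ _i : Fin n, (1:ℝ) := Finset.sum_le_sum fun i _ => hxabs i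
        _ = (n:ℝ) := by simp
    -- strict positivity after t₁
    have hafter : ∀ τ ∈ Set.Ioc t₁ T, ∀ y : Fin n → ℝ, ‖y‖ = 1 →
        0 < y ⬝ᵥ (Pt τ - Ph τ) *ᵥ y + ε * Real.exp (K * (T - τ)) * (y ⬝ᵥ y) := by
      intro τ hτ y hy
      by_contra hle
      push_neg at hle
      have hmem : (τ, y) ∈ SS := by
        refine ⟨⟨⟨le_trans ht₁Icc.1 hτ.1.le, hτ.2⟩, mem_sphere_zero_iff_norm.mpr hy⟩, ?_⟩
        simpa [hgdef] using hle
      exact absurd (hub τ ⟨(τ, y), hmem, rfl⟩) (not_le.mpr hτ.1)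
    -- t₁ < T
    have ht₁T : t₁ < T := by
      rcases lt_or_eq_of_le ht₁Icc.2 with h | h
      · exact h
      · exfalso
        have hgz : x ⬝ᵥ (Pt t₁ - Ph t₁) *ᵥ x + ε * Real.exp (K * (T - t₁)) * (x ⬝ᵥ x) ≤ 0 := by
          simpa [hgdef] using hxle0
        have h1 : 0 ≤ x ⬝ᵥ (Pt T - Ph T) *ᵥ x := by
          have := hTle.dotProduct_mulVec_nonneg x
          rwa [hstarn x] at this
        rw [h] at hgz
        have h2 : 0 < ε * Real.exp (K * (T - T)) * (x ⬝ᵥ x) := by positivity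
        linarith
    -- quadratic identity
    have hquadId : ∀ (τ : ℝ) (cc : ℝ) (y : Fin n → ℝ),
        y ⬝ᵥ ((Pt τ - Ph τ) + cc • (1 : Matrix (Fin n) (Fin n) ℝ)) *ᵥ y
          = y ⬝ᵥ (Pt τ - Ph τ) *ᵥ y + cc * (y ⬝ᵥ y) := by
      intro τ cc y
      rw [Matrix.add_mulVec, Matrix.smul_mulVec, Matrix.one_mulVec, dotProduct_add,
        dotProduct_smul, smul_eq_mul]
    set c := ε * Real.exp (K * (T - t₁)) with hc
    have hcpos : 0 < c := by positivity
    -- Ψ(t₁) is PSD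
    have hΨpsd : ((Pt t₁ - Ph t₁) + c • (1 : Matrix (Fin n) (Fin n) ℝ)).PosSemidef := by
      refine Matrix.PosSemidef.of_dotProduct_mulVec_nonneg ?_ ?_
      · refine ((hPtsym t₁).sub (hPhsym t₁)).add ?_
        simp [Matrix.IsHermitian]
      · intro y
        rw [hstarn y, hquadId]
        by_cases hy0 : y = 0
        · simp [hy0]
        · have hyn : ‖y‖ ≠ 0 := norm_ne_zero_iff.mpr hy0
          set y' := ‖y‖⁻¹ • y with hy'def
          have hy'1 : ‖y'‖ = 1 := by
            rw [hy'def, norm_smul, norm_inv, norm_norm, inv_mul_cancel₀ hyn]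
          have hcontf : ContinuousAt (fun τ =>
              y' ⬝ᵥ (Pt τ - Ph τ) *ᵥ y' + ε * Real.exp (K * (T - τ)) * (y' ⬝ᵥ y')) t₁ := by
            have hΔA : ContinuousAt (fun τ => Pt τ - Ph τ) t₁ :=
              (hPtA t₁ ht₁Icc0).sub (hPhA t₁ ht₁Icc0)
            have hquad : Continuous (fun M : Matrix (Fin n) (Fin n) ℝ => y' ⬝ᵥ M *ᵥ y') :=
              (continuous_const.dotProduct (continuous_id.matrix_mulVec continuous_const))
            refine (hquad.continuousAt.comp hΔA).add ?_
            exact ((continuous_const.mul (Real.continuous_exp.comp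
              (continuous_const.mul (continuous_const.sub continuous_id)))).mul
                continuous_const).continuousAt
          have hge : 0 ≤ y' ⬝ᵥ (Pt t₁ - Ph t₁) *ᵥ y' + ε * Real.exp (K * (T - t₁)) * (y' ⬝ᵥ y') := by
            refine ge_of_tendsto (hcontf.continuousWithinAt (s := Set.Ioi t₁)) ?_
            filter_upwards [Ioc_mem_nhdsGT_of_mem ⟨le_refl t₁, ht₁T⟩] with τ hτ
            exact (hafter τ hτ y' hy'1).le
          have hsc1 : y ⬝ᵥ (Pt t₁ - Ph t₁) *ᵥ y
              = ‖y‖^2 * (y' ⬝ᵥ (Pt t₁ - Ph t₁) *ᵥ y') := by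
            rw [hy'def]
            rw [Matrix.mulVec_smul, dotProduct_smul, smul_dotProduct]
            simp only [smul_eq_mul]
            field_simp
          have hsc2 : y ⬝ᵥ y = ‖y‖^2 * (y' ⬝ᵥ y') := by
            rw [hy'def, dotProduct_smul, smul_dotProduct]
            simp only [smul_eq_mul]
            field_simp
          rw [hsc1, hsc2]
          have h2 : 0 ≤ y' ⬝ᵥ (Pt t₁ - Ph t₁) *ᵥ y' + c * (y' ⬝ᵥ y') := by
            rw [hc]; exact hge
          nlinarith [sq_nonneg ‖y‖]
    -- quadratic form vanishes at (t₁, x)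
    have hf0 : x ⬝ᵥ (Pt t₁ - Ph t₁) *ᵥ x + c * (x ⬝ᵥ x) = 0 := by
      refine le_antisymm (by simpa [hgdef, ← hc] using hxle0) ?_
      have := hΨpsd.dotProduct_mulVec_nonneg x
      rwa [hstarn x, hquadId] at this
    have hker : ((Pt t₁ - Ph t₁) + c • (1 : Matrix (Fin n) (Fin n) ℝ)) *ᵥ x = 0 := by
      refine (hΨpsd.dotProduct_mulVec_zero_iff x).mp ?_
      rw [hstarn x, hquadId]
      exact hf0
    have hf0' : x ⬝ᵥ (Pt t₁ - Ph t₁) *ᵥ x + ε * Real.exp (K * (T - t₁)) * (x ⬝ᵥ x) = 0 := by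
      rw [← hc]; exact hf0
    have hΔx : (Pt t₁ - Ph t₁) *ᵥ x = (-c) • x := by
      rw [Matrix.add_mulVec, Matrix.smul_mulVec, Matrix.one_mulVec] at hker
      have := eq_neg_of_add_eq_zero_left hker
      rw [this, neg_smul]
    -- derivative of the scalar function
    have hφd : HasDerivAt (fun τ => ε * Real.exp (K * (T - τ))) (-(K * c)) t₁ := by
      have h1 : HasDerivAt (fun τ : ℝ => K * (T - τ)) (-K) t₁ := by
        simpa using ((hasDerivAt_id t₁).const_sub T).const_mul K
      have h2 := (Real.hasDerivAt_exp (K * (T - t₁))).comp t₁ h1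
      have h3 := h2.const_mul ε
      refine h3.congr_deriv ?_
      rw [hc]; ring
    have hfd : HasDerivAt
        (fun τ => x ⬝ᵥ (Pt τ - Ph τ) *ᵥ x + ε * Real.exp (K * (T - τ)) * (x ⬝ᵥ x))
        (x ⬝ᵥ (ricDD (A t₁) (C t₁) (Pt t₁) (Ph t₁) (B t₁) (D t₁) (R t₁)) *ᵥ x
          + (-(K * c)) * (x ⬝ᵥ x)) t₁ :=
      (hasDerivAt_quad (hΔd t₁ ht₁Icc0)).add (hφd.mul_const _)
    have hm := deriv_nonneg_right hfd hf0' ht₁T (fun τ hτ => (hafter τ hτ x hx1).le)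
    -- estimates at t₁
    set AB := ricAb (A t₁) (C t₁) (Pt t₁) (B t₁) (D t₁) (R t₁) with hABdef
    set CB := ricCb (C t₁) (Pt t₁) (B t₁) (D t₁) (R t₁) with hCBdef
    set WB := ricW (C t₁) (Pt t₁) (Ph t₁) (B t₁) (D t₁) (R t₁) with hWBdef
    have hΔT : (Pt t₁ - Ph t₁)ᵀ = Pt t₁ - Ph t₁ := by
      rw [Matrix.transpose_sub, hPtT, hPhT]
    have e1 : x ⬝ᵥ ((Pt t₁ - Ph t₁) * AB) *ᵥ x = -c * (x ⬝ᵥ AB *ᵥ x) := by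
      rw [← Matrix.mulVec_mulVec, Matrix.dotProduct_mulVec]
      rw [show x ᵥ* (Pt t₁ - Ph t₁) = (-c) • x by
        conv_lhs => rw [← hΔT]
        rw [Matrix.vecMul_transpose, hΔx]]
      rw [smul_dotProduct, smul_eq_mul]
    have e2 : x ⬝ᵥ (ABᵀ * (Pt t₁ - Ph t₁)) *ᵥ x = -c * (x ⬝ᵥ AB *ᵥ x) := by
      rw [← Matrix.mulVec_mulVec, hΔx, Matrix.mulVec_smul, dotProduct_smul, smul_eq_mul]
      congr 1
      rw [Matrix.dotProduct_mulVec, Matrix.vecMul_transpose, dotProduct_comm]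
    have e3 : x ⬝ᵥ (CBᵀ * ((Pt t₁ - Ph t₁) * CB)) *ᵥ x
        = (CB *ᵥ x) ⬝ᵥ (Pt t₁ - Ph t₁) *ᵥ (CB *ᵥ x) := by
      rw [← Matrix.mulVec_mulVec, ← Matrix.mulVec_mulVec, Matrix.dotProduct_mulVec,
        Matrix.vecMul_transpose]
    have e4 : x ⬝ᵥ (WBᵀ * ((R t₁ + (D t₁)ᵀ * Ph t₁ * D t₁) * WB)) *ᵥ x
        = (WB *ᵥ x) ⬝ᵥ (R t₁ + (D t₁)ᵀ * Ph t₁ * D t₁) *ᵥ (WB *ᵥ x) := by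
      rw [← Matrix.mulVec_mulVec, ← Matrix.mulVec_mulVec, Matrix.dotProduct_mulVec,
        Matrix.vecMul_transpose]
    have hDDexp : ricDD (A t₁) (C t₁) (Pt t₁) (Ph t₁) (B t₁) (D t₁) (R t₁)
        = -((Pt t₁ - Ph t₁) * AB + ABᵀ * (Pt t₁ - Ph t₁)
            + CBᵀ * ((Pt t₁ - Ph t₁) * CB)
            + WBᵀ * ((R t₁ + (D t₁)ᵀ * Ph t₁ * D t₁) * WB)) := by
      rw [hABdef, hCBdef, hWBdef]; rfl
    have hq : x ⬝ᵥ (ricDD (A t₁) (C t₁) (Pt t₁) (Ph t₁) (B t₁) (D t₁) (R t₁)) *ᵥ x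
        = -((-c * (x ⬝ᵥ AB *ᵥ x)) + (-c * (x ⬝ᵥ AB *ᵥ x))
            + ((CB *ᵥ x) ⬝ᵥ (Pt t₁ - Ph t₁) *ᵥ (CB *ᵥ x))
            + ((WB *ᵥ x) ⬝ᵥ (R t₁ + (D t₁)ᵀ * Ph t₁ * D t₁) *ᵥ (WB *ᵥ x))) := by
      rw [hDDexp, Matrix.neg_mulVec, dotProduct_neg, Matrix.add_mulVec, Matrix.add_mulVec,
        Matrix.add_mulVec, dotProduct_add, dotProduct_add, dotProduct_add, e1, e2, e3, e4]
    -- scalar bounds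
    have hABn : ‖AB‖ ≤ α := hα t₁ ht₁Icc0
    have hCBn : ‖CB‖ ≤ γ := hγ t₁ ht₁Icc0
    have hsumpos : (0:ℝ) ≤ ∑ i, |x i| := Finset.sum_nonneg fun i _ => abs_nonneg _
    have ha1 : |x ⬝ᵥ AB *ᵥ x| ≤ (n:ℝ)^2 * α := by
      calc |x ⬝ᵥ AB *ᵥ x| ≤ (∑ i, |x i|) * (∑ j, |x j|) * ‖AB‖ := dot_mulVec_bound x x AB
        _ ≤ (n:ℝ) * (n:ℝ) * α := by
            refine mul_le_mul (mul_le_mul hxsum hxsum hsumpos (Nat.cast_nonneg n)) hABn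
              (norm_nonneg _) (by positivity)
        _ = (n:ℝ)^2 * α := by ring
    have hyent : ∀ i, |(CB *ᵥ x) i| ≤ (n:ℝ) * γ := by
      intro i
      calc |(CB *ᵥ x) i| ≤ ∑ j, ‖CB‖ * |x j| := mulVec_entry_bound CB x i
        _ ≤ ∑ _j : Fin n, γ * 1 := Finset.sum_le_sum fun j _ =>
            mul_le_mul hCBn (hxabs j) (abs_nonneg _) hγ0
        _ = (n:ℝ) * γ := by simp [mul_comm]
    have hyy : (CB *ᵥ x) ⬝ᵥ (CB *ᵥ x) ≤ (n:ℝ)^3 * γ^2 := by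
      calc (CB *ᵥ x) ⬝ᵥ (CB *ᵥ x) = ∑ i, (CB *ᵥ x) i * (CB *ᵥ x) i := rfl
        _ ≤ ∑ _i : Fin n, ((n:ℝ) * γ) * ((n:ℝ) * γ) := by
            refine Finset.sum_le_sum fun i _ => ?_
            calc (CB *ᵥ x) i * (CB *ᵥ x) i = |(CB *ᵥ x) i| * |(CB *ᵥ x) i| :=
                  (abs_mul_abs_self _).symm
              _ ≤ ((n:ℝ) * γ) * ((n:ℝ) * γ) :=
                  mul_self_le_mul_self (abs_nonneg _) (hyent i)
        _ = (n:ℝ)^3 * γ^2 := by simp; ring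
    have hq3 : -(c * ((n:ℝ)^3 * γ^2)) ≤ (CB *ᵥ x) ⬝ᵥ (Pt t₁ - Ph t₁) *ᵥ (CB *ᵥ x) := by
      have hps := hΨpsd.dotProduct_mulVec_nonneg (CB *ᵥ x)
      rw [hstarn, hquadId] at hps
      have hcy : c * ((CB *ᵥ x) ⬝ᵥ (CB *ᵥ x)) ≤ c * ((n:ℝ)^3 * γ^2) :=
        mul_le_mul_of_nonneg_left hyy hcpos.le
      linarith
    have hq4 : 0 ≤ (WB *ᵥ x) ⬝ᵥ (R t₁ + (D t₁)ᵀ * Ph t₁ * D t₁) *ᵥ (WB *ᵥ x) := by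
      have := (hPhpos t₁ ht₁Icc0).posSemidef.dotProduct_mulVec_nonneg (WB *ᵥ x)
      rwa [hstarl] at this
    -- combine
    rw [hq] at hm
    have hKxx : K * c ≤ K * c * (x ⬝ᵥ x) := le_mul_of_one_le_right (by positivity) hxx1
    have hKc' : K * c = c * ((n:ℝ)^2 * α) * 2 + c * ((n:ℝ)^3 * γ^2) + c := by
      rw [hKdef]; ring
    have hca' : c * (x ⬝ᵥ AB *ᵥ x) ≤ c * ((n:ℝ)^2 * α) :=
      mul_le_mul_of_nonneg_left (le_of_abs_le ha1) hcpos.le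
    linarith [hm, hq3, hq4, hKxx, hKc', hcpos, hca']
  -- conclude positive semidefiniteness at t₀
  refine .of_dotProduct_mulVec_nonneg ((hPtsym t₀).sub (hPhsym t₀)) fun y => ?_
  rw [hstarn y]
  by_cases hy0 : y = 0
  · simp [hy0]
  · have hyn : ‖y‖ ≠ 0 := norm_ne_zero_iff.mpr hy0
    set y' := ‖y‖⁻¹ • y with hy'def
    have hy'1 : ‖y'‖ = 1 := by
      rw [hy'def, norm_smul, norm_inv, norm_norm, inv_mul_cancel₀ hyn]
    have hq0 : 0 ≤ y' ⬝ᵥ (Pt t₀ - Ph t₀) *ᵥ y' := by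
      by_contra hneg
      push_neg at hneg
      set q := y' ⬝ᵥ (Pt t₀ - Ph t₀) *ᵥ y' with hqdef
      set Cc := Real.exp (K * (T - t₀)) * (y' ⬝ᵥ y') with hCcdef
      have hCge : 0 < Cc := by
        have hyy' : 0 < y' ⬝ᵥ y' :=
          lt_of_lt_of_le one_pos (one_le_dot_self hn y' hy'1)
        rw [hCcdef]
        exact mul_pos (Real.exp_pos _) hyy'
      have hε : 0 < -q / (2 * Cc) := by
        apply div_pos (by linarith) (by linarith)
      have := main (-q / (2 * Cc)) hε t₀ ⟨le_refl t₀, ht₀.2⟩ y' hy'1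
      rw [← hqdef] at this
      have hrw : -q / (2 * Cc) * Real.exp (K * (T - t₀)) * (y' ⬝ᵥ y') = -q / (2 * Cc) * Cc := by
        rw [hCcdef]; ring
      rw [hrw] at this
      have : 0 < q + -q / 2 := by
        have hne : (2 : ℝ) * Cc ≠ 0 := by linarith
        have : -q / (2 * Cc) * Cc = -q / 2 := by
          field_simp
        linarith [this ▸ ‹0 < q + -q / (2 * Cc) * Cc›]
      linarith
    have hsc : y ⬝ᵥ (Pt t₀ - Ph t₀) *ᵥ y = ‖y‖^2 * (y' ⬝ᵥ (Pt t₀ - Ph t₀) *ᵥ y') := by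
      rw [hy'def, Matrix.mulVec_smul, dotProduct_smul, smul_dotProduct]
      simp only [smul_eq_mul]
      field_simp
    rw [hsc]
    positivity
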